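/- (PR under ReLU with opposite-phase filters) Let Φ, Φ̃ ∈ ℝ^{n×n} with Φ̃Φᵀ = I_n, and let Ψ₊, Ψ̃₊ ∈ ℝ^{pd×m} with Ψ₊Ψ̃₊ᵀ = I_{pd}. Setting Ψ = [Ψ₊ −Ψ₊] and Ψ̃ = [Ψ̃₊ −Ψ̃₊], for every X ∈ ℝ^{n×p}: X = H_{d|p}^†( Φ̃ ρ(Φᵀ H_{d|p}(X) Ψ) Ψ̃ᵀ ), where ρ is the entrywise ReLU. -/

import Mathlib

open Matrix BigOperators Finset

noncomputable section

/-- Zero-padding of a length-`d` filter to a signal on `ZMod n`. -/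
def zpad {n d : ℕ} [NeZero n] (ψ : Fin d → ℝ) : ZMod n → ℝ :=
  fun k => if h : (ZMod.val k) < d then ψ ⟨ZMod.val k, h⟩ else 0

/-- Circular convolution of two signals on `ZMod n`. -/
def cconv {n : ℕ} [NeZero n] (f g : ZMod n → ℝ) : ZMod n → ℝ :=
  fun k => ∑ l : ZMod n, f l * g (k - l)

/-- Index flip of a signal on `ZMod n`. -/
def cflip {n : ℕ} (g : ZMod n → ℝ) : ZMod n → ℝ := fun k => g (-k)

/-- Wrap-around Hankel matrix `H_d(f)` of `f : ZMod n → ℝ`. -/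
def hankel {n : ℕ} (d : ℕ) (f : ZMod n → ℝ) : Matrix (ZMod n) (Fin d) ℝ :=
  Matrix.of fun i j => f (i + ((j : ℕ) : ZMod n))

/-- Frobenius (trace) inner product of two matrices. -/
def frobInner {I J : Type*} [Fintype I] [Fintype J] (A B : Matrix I J ℝ) : ℝ :=
  ∑ i, ∑ j, A i j * B i j

/-- Orthonormal Hankel basis element `E_k = (1/√d) H_d(e_k)`. -/
def hankE {n : ℕ} [NeZero n] (d : ℕ) (k : ZMod n) : Matrix (ZMod n) (Fin d) ℝ :=
  (Real.sqrt d)⁻¹ • hankel d (Pi.single k 1)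

/-- Generalized (left) inverse of the Hankel lifting. -/
def hdag {n d : ℕ} [NeZero n] (B : Matrix (ZMod n) (Fin d) ℝ) : ZMod n → ℝ :=
  fun k => (Real.sqrt d)⁻¹ * frobInner (hankE d k) B

/-- Extended Hankel matrix `H_{d|p}(Z)` of a `p`-channel signal. -/
def hankelExt {n : ℕ} (d p : ℕ) (Z : Matrix (ZMod n) (Fin p) ℝ) :
    Matrix (ZMod n) (Fin p × Fin d) ℝ :=
  Matrix.of fun i cj => Z (i + ((cj.2 : ℕ) : ZMod n)) cj.1

/-- Generalized (left) inverse of the extended Hankel lifting. -/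
def hdagExt {n d p : ℕ} [NeZero n] (Y : Matrix (ZMod n) (Fin p × Fin d) ℝ) :
    Matrix (ZMod n) (Fin p) ℝ :=
  Matrix.of fun k c => hdag (Matrix.of fun i j => Y i (c, j)) k

/-- Entrywise ReLU on matrices. -/
def reluM {I J : Type*} (A : Matrix I J ℝ) : Matrix I J ℝ :=
  Matrix.of fun i j => max 0 (A i j)

/-- PR under ReLU with opposite-phase filters: with
`Φ̃Φᵀ = I_n` and `Ψ₊Ψ̃₊ᵀ = I_{pd}`, setting `Ψ = [Ψ₊ −Ψ₊]`,
`Ψ̃ = [Ψ̃₊ −Ψ̃₊]`, every `X ∈ ℝ^{n×p}` satisfies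
`X = H_{d|p}^†(Φ̃ ρ(Φᵀ H_{d|p}(X) Ψ) Ψ̃ᵀ)`. -/

lemma reluM_sub_reluM_neg {I J : Type*} (A : Matrix I J ℝ) :
    reluM A - reluM (-A) = A := by
  ext i j
  simp only [reluM, Matrix.sub_apply, Matrix.of_apply, Matrix.neg_apply]
  rcases le_total 0 (A i j) with h | h
  · rw [max_eq_right h, max_eq_left (neg_nonpos.mpr h)]; ring
  · rw [max_eq_left h, max_eq_right (neg_nonneg.mpr h)]; ring

lemma reluM_fromColumns {I J K : Type*} (A : Matrix I J ℝ) (B : Matrix I K ℝ) :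
    reluM (Matrix.fromCols A B) = Matrix.fromCols (reluM A) (reluM B) := by
  ext i j
  cases j <;> rfl

lemma hdagExt_hankelExt {n d p : ℕ} [NeZero n] (hd : 0 < d)
    (X : Matrix (ZMod n) (Fin p) ℝ) : hdagExt (hankelExt d p X) = X := by
  ext k c
  simp only [hdagExt, hdag, hankE, frobInner, hankelExt, Matrix.of_apply,
    Matrix.smul_apply, hankel, smul_eq_mul]
  have key : ∀ j : Fin d, ∑ i : ZMod n,
      (Pi.single k 1 : ZMod n → ℝ) (i + ((j : ℕ) : ZMod n)) * X (i + ((j : ℕ) : ZMod n)) c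
      = X k c := by
    intro j
    have := Equiv.sum_comp (Equiv.addRight (((j : ℕ) : ZMod n)))
      (fun i => (Pi.single k 1 : ZMod n → ℝ) i * X i c)
    simp only [Equiv.coe_addRight] at this
    rw [this]
    simp [Pi.single_apply]
  rw [Finset.sum_comm]
  have step : ∀ j : Fin d, ∑ i : ZMod n,
      (Real.sqrt d)⁻¹ * (Pi.single k 1 : ZMod n → ℝ) (i + ((j:ℕ):ZMod n)) *
        X (i + ((j:ℕ):ZMod n)) c = (Real.sqrt d)⁻¹ * X k c := by
    intro j
    simp only [mul_assoc]
    rw [← Finset.mul_sum, key j]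
  rw [Finset.sum_congr rfl (fun j _ => step j), Finset.sum_const,
    Finset.card_univ, Fintype.card_fin, nsmul_eq_mul]
  have hds : (0:ℝ) < Real.sqrt d := Real.sqrt_pos.mpr (by exact_mod_cast hd)
  rw [show ((d:ℝ)) = Real.sqrt d * Real.sqrt d from
    (Real.mul_self_sqrt (by positivity)).symm]
  field_simp
  rw [Real.sqrt_sq hds.le]

theorem PR_under_ReLU {n d p m : ℕ} [NeZero n] (hd : 0 < d)
    (Phi Phit : Matrix (ZMod n) (ZMod n) ℝ) (hPhi : Phit * Phiᵀ = 1)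
    (Pp Ppt : Matrix (Fin p × Fin d) (Fin m) ℝ) (hP : Pp * Pptᵀ = 1)
    (X : Matrix (ZMod n) (Fin p) ℝ) :
    X = hdagExt (Phit *
      reluM (Phiᵀ * hankelExt d p X * Matrix.fromCols Pp (-Pp)) *
      (Matrix.fromCols Ppt (-Ppt))ᵀ) := by
  have key : Phit * reluM (Phiᵀ * hankelExt d p X * Matrix.fromCols Pp (-Pp)) *
      (Matrix.fromCols Ppt (-Ppt))ᵀ = hankelExt d p X := by
    set A := Phiᵀ * hankelExt d p X with hA
    rw [Matrix.mul_fromCols, reluM_fromColumns, Matrix.transpose_fromCols,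
      Matrix.mul_assoc, Matrix.fromCols_mul_fromRows]
    have : reluM (A * Pp) * Pptᵀ + reluM (A * -Pp) * (-Ppt)ᵀ
        = (reluM (A * Pp) - reluM (-(A * Pp))) * Pptᵀ := by
      rw [Matrix.sub_mul]
      simp [Matrix.mul_neg, Matrix.transpose_neg, Matrix.mul_neg, sub_eq_add_neg]
    rw [this, reluM_sub_reluM_neg, Matrix.mul_assoc, hP, Matrix.mul_one, hA,
      ← Matrix.mul_assoc, hPhi, Matrix.one_mul]
  rw [key, hdagExt_hankelExt hd]
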